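/- Let α, m, λ, E ∈ ℂ with λ ≠ 0, V(z) = α/z + m + λz, and ω(z) = (1 − α)/z − m − λz. If ψ = P exp(∫ ω dz) with P a nonzero polynomial of degree d solving ψ'' = (V² + V' − E²)ψ, then P satisfies P'' + 2((1−α)/z − m − λz)P' = (2m/z − 2λ d)P and necessarily d = E²/(2λ) − 2. -/

import Mathlib

open Polynomial Filter


/-- Third Kovacic subcase for V = α/z + m + λz with ω = (1−α)/z − m − λz: if ψ = P·Φ,
Φ' = ωΦ ≠ 0 on an open nonempty U ⊆ ℂ \ {0}, P a nonzero polynomial of degree d, and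
ψ'' = (V² + V' − E²)ψ on U, then P satisfies
P'' + 2((1−α)/z − m − λz)P' = (2m/z − 2λd)P on U and d = E²/(2λ) − 2. -/
theorem kovacic_subcase3_quantization (α m lam E : ℂ) (hlam : lam ≠ 0)
    (d : ℕ) (P : Polynomial ℂ) (hP : P ≠ 0) (hdeg : P.natDegree = d)
    (V ω : ℂ → ℂ)
    (hV : ∀ z : ℂ, z ≠ 0 → V z = α / z + m + lam * z)
    (hω : ∀ z : ℂ, z ≠ 0 → ω z = (1 - α) / z - m - lam * z)
    (U : Set ℂ) (hU : IsOpen U) (hUne : U.Nonempty) (hU0 : (0 : ℂ) ∉ U)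
    (Φ : ℂ → ℂ) (hΦ0 : ∀ z ∈ U, Φ z ≠ 0)
    (hΦ : ∀ z ∈ U, HasDerivAt Φ (ω z * Φ z) z)
    (ψ : ℂ → ℂ) (hψ : ∀ z : ℂ, ψ z = P.eval z * Φ z)
    (hode : ∀ z ∈ U, deriv (deriv ψ) z = (V z ^ 2 + deriv V z - E ^ 2) * ψ z) :
    (∀ z ∈ U, (P.derivative.derivative).eval z
        + 2 * ((1 - α) / z - m - lam * z) * P.derivative.eval z
        = (2 * m / z - 2 * lam * d) * P.eval z) ∧
      (d : ℂ) = E ^ 2 / (2 * lam) - 2 := by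
  have hUz : ∀ z ∈ U, z ≠ (0:ℂ) := fun z hz h0 => hU0 (h0 ▸ hz)
  -- the pointwise cleared-denominator identity
  have key : ∀ z ∈ U,
      z * (P.derivative.derivative).eval z
        + (2*(1-α) - 2*m*z - 2*lam*z^2) * P.derivative.eval z
        = (2*m + (4*lam - E^2)*z) * P.eval z := by
    intro z hz
    have hz0 : z ≠ 0 := hUz z hz
    have hΦne : Φ z ≠ 0 := hΦ0 z hz
    have hψf : ψ = fun w => P.eval w * Φ w := funext hψ
    -- first derivative of ψ on U
    have hderiv : ∀ w ∈ U, deriv ψ w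
        = P.derivative.eval w * Φ w + P.eval w * (ω w * Φ w) := by
      intro w hw
      have h1 : HasDerivAt ψ (P.derivative.eval w * Φ w + P.eval w * (ω w * Φ w)) w := by
        rw [hψf]; exact (P.hasDerivAt w).mul (hΦ w hw)
      exact h1.deriv
    -- derivative of f
    have hfd : HasDerivAt (fun w : ℂ => (1-α)/w - m - lam*w)
        (-(1-α)/z^2 - lam) z := by
      have h1 : HasDerivAt (fun w : ℂ => (1-α)/w - m - lam*w)
          ((1-α) * (-(z^2)⁻¹) - lam * 1) z := by
        simp only [div_eq_mul_inv]
        exact (((hasDerivAt_inv hz0).const_mul (1-α)).sub_const m).sub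
          ((hasDerivAt_id z).const_mul lam)
      convert h1 using 1
      field_simp
    -- second derivative of ψ at z
    have hΦz : HasDerivAt Φ (((1-α)/z - m - lam*z) * Φ z) z := by
      have := hΦ z hz; rwa [hω z hz0] at this
    have hg2 : HasDerivAt
        (fun w => P.derivative.eval w * Φ w + P.eval w * (((1-α)/w - m - lam*w) * Φ w))
        ((P.derivative.derivative.eval z
            + 2*((1-α)/z - m - lam*z) * P.derivative.eval z
            + ((-(1-α)/z^2 - lam) + ((1-α)/z - m - lam*z)^2) * P.eval z) * Φ z) z := by
      have h1 := ((P.derivative.hasDerivAt z).mul hΦz).add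
        ((P.hasDerivAt z).mul (hfd.mul hΦz))
      refine h1.congr_deriv ?_
      simp only [Pi.mul_apply]; ring
    have hEq : deriv ψ =ᶠ[nhds z]
        (fun w => P.derivative.eval w * Φ w + P.eval w * (((1-α)/w - m - lam*w) * Φ w)) := by
      filter_upwards [hU.mem_nhds hz] with w hw
      rw [hderiv w hw, hω w (hUz w hw)]
    have hdd : deriv (deriv ψ) z
        = (P.derivative.derivative.eval z
            + 2*((1-α)/z - m - lam*z) * P.derivative.eval z
            + ((-(1-α)/z^2 - lam) + ((1-α)/z - m - lam*z)^2) * P.eval z) * Φ z := by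
      rw [hEq.deriv_eq]; exact hg2.deriv
    -- deriv V at z
    have hVd : deriv V z = -α/z^2 + lam := by
      have hVev : V =ᶠ[nhds z] fun w => α/w + m + lam*w := by
        filter_upwards [eventually_ne_nhds hz0] with w hw
        exact hV w hw
      rw [hVev.deriv_eq]
      have h1 : HasDerivAt (fun w : ℂ => α/w + m + lam*w)
          (α * (-(z^2)⁻¹) + lam * 1) z := by
        simp only [div_eq_mul_inv]
        exact (((hasDerivAt_inv hz0).const_mul α).add_const m).add
          ((hasDerivAt_id z).const_mul lam)
      rw [h1.deriv]
      field_simp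
    -- combine
    have hE := hode z hz
    rw [hdd, hVd, hV z hz0, hψ z] at hE
    have hE2 : P.derivative.derivative.eval z
        + 2*((1-α)/z - m - lam*z) * P.derivative.eval z
        + ((-(1-α)/z^2 - lam) + ((1-α)/z - m - lam*z)^2) * P.eval z
        = ((α/z + m + lam*z)^2 + (-α/z^2 + lam) - E^2) * P.eval z := by
      apply mul_right_cancel₀ hΦne
      rw [hE]; ring
    field_simp at hE2
    have h3 : z^4 * (z * (P.derivative.derivative).eval z
        + (2*(1-α) - 2*m*z - 2*lam*z^2) * P.derivative.eval z)
        = z^4 * ((2*m + (4*lam - E^2)*z) * P.eval z) := by linear_combination z^3 * hE2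
    exact mul_left_cancel₀ (pow_ne_zero 4 hz0) h3
  -- quantization from the polynomial identity
  have hld : P.coeff d ≠ 0 := by
    rw [← hdeg]; exact mt Polynomial.leadingCoeff_eq_zero.mp hP
  set Q : Polynomial ℂ := X * P.derivative.derivative + C (2*(1-α)) * P.derivative
      - C (2*m) * (P.derivative * X) - C (2*lam) * (P.derivative * X^2)
      - C (2*m) * P - C (4*lam - E^2) * (P * X) with hQ
  have hQ0 : Q = 0 := by
    apply Polynomial.eq_zero_of_infinite_isRoot
    obtain ⟨z0, hz0⟩ := hUne
    refine (infinite_of_mem_nhds z0 (hU.mem_nhds hz0)).mono ?_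
    intro z hz
    have k := key z hz
    simp only [Set.mem_setOf_eq, Polynomial.IsRoot, hQ, Polynomial.eval_add,
      Polynomial.eval_sub, Polynomial.eval_mul, Polynomial.eval_C, Polynomial.eval_X,
      Polynomial.eval_pow]
    linear_combination k
  have hc := congrArg (fun q => q.coeff (d+1)) hQ0
  simp only [hQ, Polynomial.coeff_add, Polynomial.coeff_sub, Polynomial.coeff_C_mul,
    Polynomial.coeff_X_mul, Polynomial.coeff_mul_X, Polynomial.coeff_mul_X_pow',
    Polynomial.coeff_derivative, Polynomial.coeff_zero] at hc
  have hc1 : P.coeff (d+1) = 0 :=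
    Polynomial.coeff_eq_zero_of_natDegree_lt (by omega)
  have hc2 : P.coeff (d+2) = 0 :=
    Polynomial.coeff_eq_zero_of_natDegree_lt (by omega)
  have hE2 : E^2 = 2*lam*d + 4*lam := by
    have hc2' : P.coeff (d+1+1) = 0 := hc2
    rcases Nat.eq_zero_or_pos d with hd0 | hdpos
    · subst hd0
      rw [if_neg (by omega)] at hc
      simp only [hc1, hc2'] at hc
      have h : (4*lam - E^2) * P.coeff 0 = 0 := by linear_combination -hc
      rcases mul_eq_zero.mp h with h | h
      · push_cast; linear_combination -h
      · exact absurd h hld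
    · obtain ⟨e, rfl⟩ : ∃ e, d = e + 1 := ⟨d - 1, by omega⟩
      rw [if_pos (by omega)] at hc
      have hidx : e + 1 + 1 - 2 = e := rfl
      rw [hidx] at hc
      simp only [hc1, hc2'] at hc
      have h : (2*lam*((e:ℂ)+1) + 4*lam - E^2) * P.coeff (e+1) = 0 := by
        push_cast at hc ⊢; linear_combination -hc
      rcases mul_eq_zero.mp h with h | h
      · push_cast; linear_combination -h
      · exact absurd h hld
  constructor
  · intro z hz
    have hz0 : z ≠ 0 := hUz z hz
    have k := key z hz
    field_simp
    linear_combination k - z * P.eval z * hE2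
  · field_simp
    linear_combination -hE2
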